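/- For each l ≥ 1 there exists u₀ > 0 such that the function u ↦ log(1+u²) · α_l(√(1+u²)) is increasing and concave on [u₀, ∞). -/

import Mathlib

/-- The iterated-logarithm hierarchy: `iterLog α 0 = α`,
`iterLog α (l+1) = log (e + iterLog α l)`. -/
noncomputable def iterLog (α : ℝ → ℝ) : ℕ → ℝ → ℝ
  | 0 => α
  | l + 1 => fun x => Real.log (Real.exp 1 + iterLog α l x)

open Real Set Filter

lemma aux_deriv_nonneg_of_monotoneOn {g : ℝ → ℝ} {x d : ℝ} (hg : MonotoneOn g (Set.Ici 0))
    (hx : 0 < x) (hd : HasDerivAt g d x) : 0 ≤ d := by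
  have h := hasDerivAt_iff_tendsto_slope.mp hd
  have h2 : Tendsto (slope g x) (nhdsWithin x (Set.Ioi x)) (nhds d) :=
    h.mono_left (nhdsWithin_mono _ (fun y hy => ne_of_gt hy))
  refine ge_of_tendsto h2 ?_
  filter_upwards [self_mem_nhdsWithin] with y (hy : x < y)
  have hgy : g x ≤ g y := hg hx.le (hx.le.trans hy.le) hy.le
  rw [slope_def_field]
  exact div_nonneg (by linarith) (by linarith)

lemma aux_deriv_nonpos_of_antitoneOn {g : ℝ → ℝ} {x d : ℝ} (hg : AntitoneOn g (Set.Ici 0))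
    (hx : 0 < x) (hd : HasDerivAt g d x) : d ≤ 0 := by
  have h := hasDerivAt_iff_tendsto_slope.mp hd
  have h2 : Tendsto (slope g x) (nhdsWithin x (Set.Ioi x)) (nhds d) :=
    h.mono_left (nhdsWithin_mono _ (fun y hy => ne_of_gt hy))
  refine le_of_tendsto h2 ?_
  filter_upwards [self_mem_nhdsWithin] with y (hy : x < y)
  have hgy : g y ≤ g x := hg hx.le (hx.le.trans hy.le) hy.le
  rw [slope_def_field]
  exact div_nonpos_of_nonpos_of_nonneg (by linarith) (by linarith)

structure AuxGood (g : ℝ → ℝ) : Prop where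
  ge_one : ∀ x : ℝ, 0 ≤ x → 1 ≤ g x
  mono : MonotoneOn g (Set.Ici 0)
  diff : ∀ x : ℝ, 0 < x → DifferentiableAt ℝ g x
  diff2 : ∀ x : ℝ, 0 < x → DifferentiableAt ℝ (deriv g) x
  d_nonneg : ∀ x : ℝ, 0 < x → 0 ≤ deriv g x
  d_le : ∀ x : ℝ, 0 < x → deriv g x ≤ g x / (1 + x)
  d2_nonpos : ∀ x : ℝ, 0 < x → deriv (deriv g) x ≤ 0

lemma auxStep_hasDerivAt {g : ℝ → ℝ} (hg : AuxGood g) {x : ℝ} (hx : 0 < x) :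
    HasDerivAt (fun y => Real.log (Real.exp 1 + g y)) (deriv g x / (Real.exp 1 + g x)) x := by
  have hpos : (0:ℝ) < Real.exp 1 + g x := by
    have := hg.ge_one x hx.le; positivity
  have h1 : HasDerivAt (fun y => Real.exp 1 + g y) (deriv g x) x :=
    ((hg.diff x hx).hasDerivAt).const_add _
  have h2 := (Real.hasDerivAt_log (ne_of_gt hpos)).comp x h1
  simpa [div_eq_inv_mul, Function.comp_def] using h2

lemma auxStep_deriv_le {g : ℝ → ℝ} (hg : AuxGood g) {x : ℝ} (hx : 0 < x) :
    deriv (fun y => Real.log (Real.exp 1 + g y)) x ≤ 1 / (1 + x) := by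
  rw [(auxStep_hasDerivAt hg hx).deriv]
  have hgx := hg.ge_one x hx.le
  have hpos : (0:ℝ) < Real.exp 1 + g x := by positivity
  have h1x : (0:ℝ) < 1 + x := by linarith
  rw [div_le_div_iff₀ hpos h1x]
  have hd := hg.d_le x hx
  have hda : deriv g x * (1 + x) ≤ g x := by
    rw [div_eq_mul_inv] at hd
    calc deriv g x * (1 + x) ≤ (g x * (1+x)⁻¹) * (1+x) :=
          mul_le_mul_of_nonneg_right hd h1x.le
    _ = g x := by field_simp
  have : (0:ℝ) < Real.exp 1 := Real.exp_pos 1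
  linarith

lemma auxGood_step {g : ℝ → ℝ} (hg : AuxGood g) :
    AuxGood (fun x => Real.log (Real.exp 1 + g x)) := by
  have hpos : ∀ x : ℝ, 0 ≤ x → 0 < Real.exp 1 + g x := fun x hx => by
    have := hg.ge_one x hx; positivity
  have hDA := fun (x : ℝ) (hx : 0 < x) => auxStep_hasDerivAt hg hx
  have hderiv : ∀ x : ℝ, 0 < x →
      deriv (fun y => Real.log (Real.exp 1 + g y)) x = deriv g x / (Real.exp 1 + g x) :=
    fun x hx => (hDA x hx).deriv
  have hge : ∀ x : ℝ, 0 ≤ x → 1 ≤ Real.log (Real.exp 1 + g x) := by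
    intro x hx
    have : Real.exp 1 ≤ Real.exp 1 + g x := by have := hg.ge_one x hx; linarith
    calc (1:ℝ) = Real.log (Real.exp 1) := (Real.log_exp 1).symm
    _ ≤ Real.log (Real.exp 1 + g x) := Real.log_le_log (Real.exp_pos 1) this
  have hev : ∀ x : ℝ, 0 < x →
      deriv (fun y => Real.log (Real.exp 1 + g y)) =ᶠ[nhds x]
        (fun y => deriv g y / (Real.exp 1 + g y)) := by
    intro x hx
    exact Filter.eventuallyEq_of_mem (isOpen_Ioi.mem_nhds hx) (fun y hy => hderiv y hy)
  have hformula_diff : ∀ x : ℝ, 0 < x →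
      DifferentiableAt ℝ (fun y => deriv g y / (Real.exp 1 + g y)) x := by
    intro x hx
    exact (hg.diff2 x hx).div ((hg.diff x hx).const_add _) (ne_of_gt (hpos x hx.le))
  refine ⟨hge, ?_, ?_, ?_, ?_, ?_, ?_⟩
  · intro x hx y hy hxy
    exact Real.log_le_log (hpos x hx) (by linarith [hg.mono hx hy hxy])
  · exact fun x hx => (hDA x hx).differentiableAt
  · intro x hx
    exact ((hev x hx).differentiableAt_iff).mpr (hformula_diff x hx)
  · intro x hx
    rw [hderiv x hx]
    exact div_nonneg (hg.d_nonneg x hx) (hpos x hx.le).le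
  · intro x hx
    have h1x : (0:ℝ) < 1 + x := by linarith
    calc deriv (fun y => Real.log (Real.exp 1 + g y)) x ≤ 1 / (1 + x) :=
          auxStep_deriv_le hg hx
    _ ≤ Real.log (Real.exp 1 + g x) / (1 + x) :=
          div_le_div_of_nonneg_right (hge x hx.le) h1x.le
  · intro x hx
    rw [(hev x hx).deriv_eq]
    have hDA2 : HasDerivAt (fun y => deriv g y / (Real.exp 1 + g y))
        ((deriv (deriv g) x * (Real.exp 1 + g x) - deriv g x * deriv g x) /
          (Real.exp 1 + g x) ^ 2) x :=
      ((hg.diff2 x hx).hasDerivAt).div (((hg.diff x hx).hasDerivAt).const_add _)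
        (ne_of_gt (hpos x hx.le))
    rw [hDA2.deriv]
    apply div_nonpos_of_nonpos_of_nonneg ?_ (sq_nonneg _)
    have h1 := hg.d2_nonpos x hx
    have h2 := hpos x hx.le
    nlinarith [sq_nonneg (deriv g x)]

lemma auxGood_iterLog (α : ℝ → ℝ)
    (hd1 : Differentiable ℝ α) (hd2 : Differentiable ℝ (deriv α))
    (hmono : MonotoneOn α (Set.Ici 0)) (hconc : ConcaveOn ℝ (Set.Ici 0) α)
    (h0 : 1 ≤ α 0)
    (hder : ∀ x : ℝ, 0 ≤ x → deriv α x ≤ α x / (1 + x)) :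
    ∀ m : ℕ, AuxGood (iterLog α m) := by
  intro m
  induction m with
  | zero =>
    refine ⟨?_, hmono, fun x _ => hd1 x, fun x _ => hd2 x, ?_, fun x hx => hder x hx.le, ?_⟩
    · intro x hx
      exact h0.trans (hmono (Set.mem_Ici.mpr (le_refl 0)) hx hx)
    · intro x hx
      exact aux_deriv_nonneg_of_monotoneOn hmono hx (hd1 x).hasDerivAt
    · intro x hx
      have hanti : AntitoneOn (deriv α) (Set.Ici 0) :=
        hconc.antitoneOn_deriv (fun y _ => hd1 y)
      exact aux_deriv_nonpos_of_antitoneOn hanti hx (hd2 x).hasDerivAt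
  | succ m ih =>
    exact auxGood_step ih

lemma aux_tendsto (α : ℝ → ℝ) (htend : Filter.Tendsto α Filter.atTop Filter.atTop) :
    ∀ m : ℕ, Filter.Tendsto (iterLog α m) Filter.atTop Filter.atTop := by
  intro m
  induction m with
  | zero => exact htend
  | succ m ih =>
    have h1 : Tendsto (fun x => Real.exp 1 + iterLog α m x) atTop atTop :=
      tendsto_atTop_add_const_left _ _ ih
    exact Real.tendsto_log_atTop.comp h1

section derivs
variable {u : ℝ}

variable {u : ℝ}

lemma aux_hasDerivAt_den (u : ℝ) : HasDerivAt (fun y : ℝ => 1 + y ^ 2) (2 * u) u := by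
  simpa using (hasDerivAt_pow 2 u).const_add 1

lemma aux_hasDerivAt_log1 (u : ℝ) :
    HasDerivAt (fun y : ℝ => Real.log (1 + y ^ 2)) (2 * u / (1 + u ^ 2)) u := by
  have h1u : (0:ℝ) < 1 + u ^ 2 := by positivity
  have h := (Real.hasDerivAt_log (ne_of_gt h1u)).comp u (aux_hasDerivAt_den u)
  simpa [Function.comp_def, div_eq_inv_mul] using h

lemma aux_hasDerivAt_sqrt1 (u : ℝ) :
    HasDerivAt (fun y : ℝ => Real.sqrt (1 + y ^ 2)) (u / Real.sqrt (1 + u ^ 2)) u := by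
  have h1u : (0:ℝ) < 1 + u ^ 2 := by positivity
  have hs0 : (0:ℝ) < Real.sqrt (1 + u ^ 2) := Real.sqrt_pos.mpr h1u
  have h := (Real.hasDerivAt_sqrt (ne_of_gt h1u)).comp u (aux_hasDerivAt_den u)
  have h2 : HasDerivAt (fun y : ℝ => Real.sqrt (1 + y ^ 2))
      (1 / (2 * Real.sqrt (1 + u ^ 2)) * (2 * u)) u := by
    simpa [Function.comp_def] using h
  convert h2 using 1
  field_simp

end derivs
noncomputable def auxF2 (β : ℝ → ℝ) (u : ℝ) : ℝ :=
  (2 * (1 + u ^ 2) - 2 * u * (2 * u)) / (1 + u ^ 2) ^ 2 * β (Real.sqrt (1 + u ^ 2))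
    + 2 * u / (1 + u ^ 2) * (deriv β (Real.sqrt (1 + u ^ 2)) * (u / Real.sqrt (1 + u ^ 2)))
    + (2 * u / (1 + u ^ 2) * (deriv β (Real.sqrt (1 + u ^ 2)) * (u / Real.sqrt (1 + u ^ 2)))
       + Real.log (1 + u ^ 2) *
         ((deriv (deriv β) (Real.sqrt (1 + u ^ 2)) * (u / Real.sqrt (1 + u ^ 2)))
              * (u / Real.sqrt (1 + u ^ 2))
            + deriv β (Real.sqrt (1 + u ^ 2)) *
              ((1 * Real.sqrt (1 + u ^ 2) - u * (u / Real.sqrt (1 + u ^ 2)))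
                / Real.sqrt (1 + u ^ 2) ^ 2)))

lemma aux_hasDerivAt_F {β : ℝ → ℝ} (hβ : AuxGood β) {u : ℝ} (hu : 0 < u) :
    HasDerivAt (fun y => Real.log (1 + y ^ 2) * β (Real.sqrt (1 + y ^ 2)))
      (2 * u / (1 + u ^ 2) * β (Real.sqrt (1 + u ^ 2))
        + Real.log (1 + u ^ 2) *
          (deriv β (Real.sqrt (1 + u ^ 2)) * (u / Real.sqrt (1 + u ^ 2)))) u := by
  have h1u : (0:ℝ) < 1 + u ^ 2 := by positivity
  have hs0 : (0:ℝ) < Real.sqrt (1 + u ^ 2) := Real.sqrt_pos.mpr h1u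
  have hB : HasDerivAt (fun y => β (Real.sqrt (1 + y ^ 2)))
      (deriv β (Real.sqrt (1 + u ^ 2)) * (u / Real.sqrt (1 + u ^ 2))) u :=
    ((hβ.diff _ hs0).hasDerivAt).comp u (aux_hasDerivAt_sqrt1 u)
  exact (aux_hasDerivAt_log1 u).mul hB

lemma aux_hasDerivAt_F1 {β : ℝ → ℝ} (hβ : AuxGood β) {u : ℝ} (hu : 0 < u) :
    HasDerivAt (fun y => 2 * y / (1 + y ^ 2) * β (Real.sqrt (1 + y ^ 2))
        + Real.log (1 + y ^ 2) *
          (deriv β (Real.sqrt (1 + y ^ 2)) * (y / Real.sqrt (1 + y ^ 2))))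
      (auxF2 β u) u := by
  have h1u : (0:ℝ) < 1 + u ^ 2 := by positivity
  have hs0 : (0:ℝ) < Real.sqrt (1 + u ^ 2) := Real.sqrt_pos.mpr h1u
  have hc : HasDerivAt (fun y : ℝ => 2 * y) 2 u := by
    simpa using (hasDerivAt_id u).const_mul 2
  have hfrac : HasDerivAt (fun y : ℝ => 2 * y / (1 + y ^ 2))
      ((2 * (1 + u ^ 2) - 2 * u * (2 * u)) / (1 + u ^ 2) ^ 2) u :=
    hc.div (aux_hasDerivAt_den u) (ne_of_gt h1u)
  have hB : HasDerivAt (fun y => β (Real.sqrt (1 + y ^ 2)))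
      (deriv β (Real.sqrt (1 + u ^ 2)) * (u / Real.sqrt (1 + u ^ 2))) u :=
    ((hβ.diff _ hs0).hasDerivAt).comp u (aux_hasDerivAt_sqrt1 u)
  have hA := hfrac.mul hB
  have hp : HasDerivAt (fun y => deriv β (Real.sqrt (1 + y ^ 2)))
      (deriv (deriv β) (Real.sqrt (1 + u ^ 2)) * (u / Real.sqrt (1 + u ^ 2))) u :=
    ((hβ.diff2 _ hs0).hasDerivAt).comp (h₂ := deriv β) u (aux_hasDerivAt_sqrt1 u)
  have hquot : HasDerivAt (fun y : ℝ => y / Real.sqrt (1 + y ^ 2))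
      ((1 * Real.sqrt (1 + u ^ 2) - u * (u / Real.sqrt (1 + u ^ 2)))
        / Real.sqrt (1 + u ^ 2) ^ 2) u :=
    (hasDerivAt_id u).div (aux_hasDerivAt_sqrt1 u) (ne_of_gt hs0)
  have hC2 := hp.mul hquot
  have hC := (aux_hasDerivAt_log1 u).mul hC2
  exact hA.add hC

set_option maxHeartbeats 1000000 in
lemma auxF2_nonpos {β : ℝ → ℝ} (hβ : AuxGood β) {u : ℝ} (hu : 4 ≤ u)
    (hb3 : 3 ≤ β (Real.sqrt (1 + u ^ 2)))
    (hple : deriv β (Real.sqrt (1 + u ^ 2)) ≤ 1 / (1 + Real.sqrt (1 + u ^ 2))) :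
    auxF2 β u ≤ 0 := by
  have h1u : (0:ℝ) < 1 + u ^ 2 := by positivity
  simp only [auxF2]
  set s := Real.sqrt (1 + u ^ 2) with hsdef
  have hs0 : (0:ℝ) < s := Real.sqrt_pos.mpr h1u
  have hs2 : s ^ 2 = 1 + u ^ 2 := Real.sq_sqrt h1u.le
  have hus : u ≤ s := by
    rw [hsdef]
    calc u = Real.sqrt (u ^ 2) := (Real.sqrt_sq (by linarith)).symm
    _ ≤ Real.sqrt (1 + u ^ 2) := Real.sqrt_le_sqrt (by linarith)
  have hs4 : (4:ℝ) ≤ s := le_trans hu hus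
  set b := β s with hbdef
  set p := deriv β s with hpdef
  set q := deriv (deriv β) s with hqdef
  set L := Real.log (1 + u ^ 2) with hLdef
  have hL0 : 0 ≤ L := Real.log_nonneg (by nlinarith)
  have hLs : L ≤ u ^ 2 := by
    have := Real.log_le_sub_one_of_pos h1u
    rw [← hLdef] at this
    linarith
  have hq0 : q ≤ 0 := hβ.d2_nonpos s hs0
  have hp0 : 0 ≤ p := hβ.d_nonneg s hs0
  have hsp : s * p ≤ 1 := by
    have h1 : p * (1 + s) ≤ 1 := by
      rw [← le_div_iff₀ (by linarith : (0:ℝ) < 1 + s)]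
      exact hple
    nlinarith
  clear_value s b p q L
  clear hple hsdef hbdef hpdef hqdef hLdef
  have hone : s ^ 2 - u ^ 2 = 1 := by linarith
  refine le_of_eq_of_le (?_ :
      _ = ((2 * s ^ 2 - 4 * u ^ 2) * b + 4 * u ^ 2 * (s * p) + L * q * u ^ 2 * s ^ 2
        + L * p * s * (s ^ 2 - u ^ 2)) / s ^ 4) ?_
  · rw [← hs2]
    field_simp
    ring
  apply div_nonpos_of_nonpos_of_nonneg _ (by positivity)
  have hlast : L * p * s * (s ^ 2 - u ^ 2) = L * (s * p) := by rw [hone]; ring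
  have hA : (2 * s ^ 2 - 4 * u ^ 2) * b ≤ 12 - 6 * s ^ 2 := by
    nlinarith [mul_nonneg (by linarith : (0:ℝ) ≤ b - 3) (by nlinarith : (0:ℝ) ≤ 2 * s ^ 2 - 4)]
  have hB : 4 * u ^ 2 * (s * p) ≤ 4 * s ^ 2 - 4 := by
    nlinarith [mul_nonneg (sq_nonneg u) (by linarith : (0:ℝ) ≤ 1 - s * p)]
  have hC : L * q * u ^ 2 * s ^ 2 ≤ 0 := by
    nlinarith [mul_nonpos_of_nonpos_of_nonneg hq0
      (mul_nonneg (mul_nonneg hL0 (sq_nonneg u)) (sq_nonneg s))]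
  have hD : L * (s * p) ≤ s ^ 2 := by
    nlinarith [mul_nonneg hL0 (by linarith : (0:ℝ) ≤ 1 - s * p)]
  have h16 : (16:ℝ) ≤ s ^ 2 := by nlinarith
  rw [hlast]
  linarith
lemma aux_le_sqrt {x : ℝ} (hx : 0 ≤ x) : x ≤ Real.sqrt (1 + x ^ 2) := by
  calc x = Real.sqrt (x ^ 2) := (Real.sqrt_sq hx).symm
  _ ≤ Real.sqrt (1 + x ^ 2) := Real.sqrt_le_sqrt (by linarith)


/-- for each `l ≥ 1` there is `u₀ > 0` such that
`u ↦ log(1+u²) · α_l(√(1+u²))` is increasing and concave on `[u₀, ∞)`. -/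

theorem stmt_4 (α : ℝ → ℝ) (c : ℝ) (hc : 0 < c)
    (hd1 : Differentiable ℝ α)
    (hd2 : Differentiable ℝ (deriv α))
    (hmono : MonotoneOn α (Set.Ici 0))
    (hconc : ConcaveOn ℝ (Set.Ici 0) α)
    (h0 : 1 ≤ α 0)
    (htend : Filter.Tendsto α Filter.atTop Filter.atTop)
    (hder : ∀ x : ℝ, 0 ≤ x → deriv α x ≤ α x / (1 + x))
    (hder2 : ∀ x : ℝ, 0 ≤ x → -(c / (1 + x)) ≤ deriv (deriv α) x) :
    ∀ l : ℕ, 1 ≤ l → ∃ u₀ > (0:ℝ),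
      MonotoneOn (fun u => Real.log (1 + u ^ 2) * iterLog α l (Real.sqrt (1 + u ^ 2)))
        (Set.Ici u₀) ∧
      ConcaveOn ℝ (Set.Ici u₀)
        (fun u => Real.log (1 + u ^ 2) * iterLog α l (Real.sqrt (1 + u ^ 2))) := by
  intro l hl
  obtain ⟨m, rfl⟩ : ∃ m, l = m + 1 := ⟨l - 1, (Nat.succ_pred_eq_of_pos hl).symm⟩
  have hGγ : AuxGood (iterLog α m) := auxGood_iterLog α hd1 hd2 hmono hconc h0 hder m
  set β := iterLog α (m + 1) with hβset
  have hGβ : AuxGood β := auxGood_iterLog α hd1 hd2 hmono hconc h0 hder (m + 1)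
  have hβdef : β = fun x => Real.log (Real.exp 1 + iterLog α m x) := rfl
  have hple : ∀ s : ℝ, 0 < s → deriv β s ≤ 1 / (1 + s) := by
    intro s hs
    rw [hβdef]
    exact auxStep_deriv_le hGγ hs
  obtain ⟨T, hT⟩ :=
    Filter.eventually_atTop.mp ((aux_tendsto α htend (m + 1)).eventually_ge_atTop 3)
  set u₀ := max T 4 with hu₀def
  have hu₀4 : (4:ℝ) ≤ u₀ := le_max_right _ _
  have hu₀pos : (0:ℝ) < u₀ := by linarith
  -- pointwise facts
  have hx0 : ∀ x : ℝ, x ∈ Set.Ioi u₀ → 0 < x := fun x hx => lt_trans hu₀pos hx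
  have hF : ∀ x : ℝ, 0 < x →
      HasDerivAt (fun u => Real.log (1 + u ^ 2) * β (Real.sqrt (1 + u ^ 2)))
        (2 * x / (1 + x ^ 2) * β (Real.sqrt (1 + x ^ 2))
          + Real.log (1 + x ^ 2) *
            (deriv β (Real.sqrt (1 + x ^ 2)) * (x / Real.sqrt (1 + x ^ 2)))) x :=
    fun x hx => aux_hasDerivAt_F hGβ hx
  have hcont : ContinuousOn (fun u => Real.log (1 + u ^ 2) * β (Real.sqrt (1 + u ^ 2)))
      (Set.Ici u₀) := by
    intro x hx
    have hx' : 0 < x := lt_of_lt_of_le hu₀pos hx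
    exact ((hF x hx').differentiableAt.continuousAt).continuousWithinAt
  have hdiffOn : DifferentiableOn ℝ
      (fun u => Real.log (1 + u ^ 2) * β (Real.sqrt (1 + u ^ 2)))
      (interior (Set.Ici u₀)) := by
    rw [interior_Ici]
    intro x hx
    exact ((hF x (hx0 x hx)).differentiableAt).differentiableWithinAt
  have hev : ∀ x : ℝ, 0 < x →
      deriv (fun u => Real.log (1 + u ^ 2) * β (Real.sqrt (1 + u ^ 2))) =ᶠ[nhds x]
        (fun y => 2 * y / (1 + y ^ 2) * β (Real.sqrt (1 + y ^ 2))
          + Real.log (1 + y ^ 2) *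
            (deriv β (Real.sqrt (1 + y ^ 2)) * (y / Real.sqrt (1 + y ^ 2)))) := by
    intro x hx
    exact Filter.eventuallyEq_of_mem (isOpen_Ioi.mem_nhds hx) (fun y hy => (hF y hy).deriv)
  refine ⟨u₀, hu₀pos, ?_, ?_⟩
  · -- monotone
    apply monotoneOn_of_deriv_nonneg (convex_Ici u₀) hcont hdiffOn
    intro x hx
    rw [interior_Ici] at hx
    have hx' : 0 < x := hx0 x hx
    rw [(hF x hx').deriv]
    have h1x : (0:ℝ) < 1 + x ^ 2 := by positivity
    have hs0 : (0:ℝ) < Real.sqrt (1 + x ^ 2) := Real.sqrt_pos.mpr h1x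
    have hb1 : (1:ℝ) ≤ β (Real.sqrt (1 + x ^ 2)) := hGβ.ge_one _ hs0.le
    have hp0 : 0 ≤ deriv β (Real.sqrt (1 + x ^ 2)) := hGβ.d_nonneg _ hs0
    have hL0 : 0 ≤ Real.log (1 + x ^ 2) := Real.log_nonneg (by nlinarith)
    have ht1 : 0 ≤ 2 * x / (1 + x ^ 2) := by positivity
    exact add_nonneg (mul_nonneg ht1 (by linarith))
      (mul_nonneg hL0 (mul_nonneg hp0 (div_nonneg hx'.le hs0.le)))
  · -- concave
    apply concaveOn_of_deriv2_nonpos (convex_Ici u₀) hcont hdiffOn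
    · rw [interior_Ici]
      intro x hx
      have hx' : 0 < x := hx0 x hx
      exact (((hev x hx').differentiableAt_iff).mpr
        (aux_hasDerivAt_F1 hGβ hx').differentiableAt).differentiableWithinAt
    · intro x hx
      rw [interior_Ici] at hx
      have hx' : 0 < x := hx0 x hx
      have hiter : deriv^[2] (fun u => Real.log (1 + u ^ 2) * β (Real.sqrt (1 + u ^ 2))) x
          = deriv (deriv (fun u => Real.log (1 + u ^ 2) * β (Real.sqrt (1 + u ^ 2)))) x := rfl
      rw [hiter, (hev x hx').deriv_eq, (aux_hasDerivAt_F1 hGβ hx').deriv]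
      have hx4 : (4:ℝ) ≤ x := le_trans hu₀4 (le_of_lt (show u₀ < x from hx))
      have hsx : Real.sqrt (1 + x ^ 2) ≥ T := by
        have h1 : T ≤ u₀ := le_max_left _ _
        have := aux_le_sqrt (le_of_lt hx')
        linarith [le_of_lt (show u₀ < x from hx)]
      have hs0 : (0:ℝ) < Real.sqrt (1 + x ^ 2) := Real.sqrt_pos.mpr (by positivity)
      exact auxF2_nonpos hGβ hx4 (hT _ hsx) (hple _ hs0)
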